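/- Let k be a field of characteristic different from 2 and 3, and let r, s ∈ k with r, s ∉ {0, 1}. Set j(z) = 4(z²−z+1)³/(27 z²(z−1)²), x = j(r)+j(s), y = j(r)·j(s), and define u = 4(r²−r+1)³(s²−s+1)³, v = (rs−2r+s+1)(rs+r−2s+1)(2rs−r−s+2), v' = (rs+r+s−2)(2rs−r−s−1)(rs−2r−2s+1). If v ≠ 0 and v' ≠ 0, then x ≠ y and the two identities u/v² + u/v'² = 2y(y−x+2)/(x−y)² and (u/v²)·(u/v'²) = y²/(x−y)² hold. (This is the computational content of the theorem that the Steiner construction applied to a Pappus structure of signature [x,y] yields a Pappus structure of signature [2y(y−x+2)/(x−y)², y²/(x−y)²].) -/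

import Mathlib

/-- The `j`-function of a cross-ratio: `j(z) = 4(z²−z+1)³ / (27 z²(z−1)²)`. -/
def jfun {k : Type*} [Field k] (z : k) : k :=
  4 * (z ^ 2 - z + 1) ^ 3 / (27 * z ^ 2 * (z - 1) ^ 2)


private lemma steiner_aux {k : Type*} [Field k] (u v v' D x y : k)
    (hv : v ≠ 0) (hv' : v' ≠ 0) (h2 : (2 : k) ≠ 0) (hD0 : D ≠ 0)
    (hDvv : D = (v - v') ^ 2)
    (hx : (x - y) * D = -(4 * v * v'))
    (hu : y * D = 4 * u) :
    x ≠ y ∧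
    u / v ^ 2 + u / v' ^ 2 = 2 * y * (y - x + 2) / (x - y) ^ 2 ∧
    (u / v ^ 2) * (u / v' ^ 2) = y ^ 2 / (x - y) ^ 2 := by
  have h4 : (4 : k) ≠ 0 := by
    have := mul_ne_zero h2 h2
    norm_num at this ⊢
    exact this
  subst hDvv
  have hvv0 : v - v' ≠ 0 := fun h => hD0 (by rw [h]; ring)
  have hx' : x = y - 4 * v * v' / (v - v') ^ 2 := by
    rw [sub_div' hD0] at *
    field_simp
    linear_combination hx
  have hu' : u = y * (v - v') ^ 2 / 4 := by
    rw [eq_div_iff h4]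
    linear_combination hu.symm
  subst hx' hu'
  have hvv : v - v' ≠ 0 := by
    intro h; exact hD0 (by rw [h]; ring)
  have hxyne : y - 4 * v * v' / (v - v') ^ 2 - y ≠ 0 := by
    have : y - 4 * v * v' / (v - v') ^ 2 - y = -(4 * v * v') / (v - v') ^ 2 := by
      field_simp
      ring
    rw [this]
    exact div_ne_zero (by
      simp only [neg_ne_zero]
      exact mul_ne_zero (mul_ne_zero h4 hv) hv') (pow_ne_zero _ hvv)
  refine ⟨fun h => hxyne (sub_eq_zero.mpr h), ?_, ?_⟩
  · rw [div_add_div _ _ (pow_ne_zero 2 hv) (pow_ne_zero 2 hv'), div_eq_div_iff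
      (mul_ne_zero (pow_ne_zero 2 hv) (pow_ne_zero 2 hv'))
      (pow_ne_zero 2 (sub_ne_zero.mpr (fun h => hxyne (sub_eq_zero.mpr h))))]
    field_simp
    ring
  · rw [div_mul_div_comm, div_eq_div_iff
      (mul_ne_zero (pow_ne_zero 2 hv) (pow_ne_zero 2 hv'))
      (pow_ne_zero 2 (sub_ne_zero.mpr (fun h => hxyne (sub_eq_zero.mpr h))))]
    field_simp
    ring

/-- Computational content of the Pappus–Steiner signature theorem:
the Steiner construction applied to a Pappus structure of signature `[x,y]`
yields a Pappus structure of signature `[2y(y−x+2)/(x−y)², y²/(x−y)²]`. -/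
theorem pappus_steiner_signature {k : Type*} [Field k]
    (hchar2 : ringChar k ≠ 2) (hchar3 : ringChar k ≠ 3)
    (r s : k) (hr0 : r ≠ 0) (hr1 : r ≠ 1) (hs0 : s ≠ 0) (hs1 : s ≠ 1)
    (x y u v v' : k)
    (hx : x = jfun r + jfun s)
    (hy : y = jfun r * jfun s)
    (hu : u = 4 * (r ^ 2 - r + 1) ^ 3 * (s ^ 2 - s + 1) ^ 3)
    (hv : v = (r * s - 2 * r + s + 1) * (r * s + r - 2 * s + 1) * (2 * r * s - r - s + 2))
    (hv' : v' = (r * s + r + s - 2) * (2 * r * s - r - s - 1) * (r * s - 2 * r - 2 * s + 1))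
    (hvne : v ≠ 0) (hv'ne : v' ≠ 0) :
    x ≠ y ∧
    u / v ^ 2 + u / v' ^ 2 = 2 * y * (y - x + 2) / (x - y) ^ 2 ∧
    (u / v ^ 2) * (u / v' ^ 2) = y ^ 2 / (x - y) ^ 2 := by
  have h2 : (2:k) ≠ 0 := Ring.two_ne_zero hchar2
  have h3 : (3:k) ≠ 0 := by
    intro h0
    have hd : ringChar k ∣ 3 := by
      have := (ringChar.spec k 3)
      simpa using this.mp (by exact_mod_cast h0)
    rcases (Nat.prime_three.eq_one_or_self_of_dvd _ hd) with h1 | h3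
    · exact CharP.ringChar_ne_one h1
    · exact hchar3 h3
  have h27 : (27:k) ≠ 0 := by
    have : (27:k) = 3 ^ 3 := by norm_num
    rw [this]; exact pow_ne_zero _ h3
  have hr1' : r - 1 ≠ 0 := sub_ne_zero.mpr hr1
  have hs1' : s - 1 ≠ 0 := sub_ne_zero.mpr hs1
  have ha : (27:k) * r ^ 2 * (r - 1) ^ 2 ≠ 0 :=
    mul_ne_zero (mul_ne_zero h27 (pow_ne_zero _ hr0)) (pow_ne_zero _ hr1')
  have hb : (27:k) * s ^ 2 * (s - 1) ^ 2 ≠ 0 :=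
    mul_ne_zero (mul_ne_zero h27 (pow_ne_zero _ hs0)) (pow_ne_zero _ hs1')
  refine steiner_aux u v v' ((27 * r ^ 2 * (r - 1) ^ 2) * (27 * s ^ 2 * (s - 1) ^ 2)) x y
    hvne hv'ne h2 (mul_ne_zero ha hb) ?_ ?_ ?_
  · rw [hv, hv']; ring
  · rw [hx, hy, hv, hv']
    unfold jfun
    field_simp
    ring
  · rw [hu, hy]
    unfold jfun
    field_simp
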